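/- If G is a connected generously-transitive graph, then rc(G) = rad(G) − 1. -/

import Mathlib

open SimpleGraph

/-- The cop's sequence of positions, given his initial vertex `c₀` and a
(history-dependent) strategy `F`, where `F n` determines the cop's `(n+1)`-st
position from the robber's positions `r 0, …, r n` seen so far. -/
def copSeq {V : Type*} (c₀ : V) (F : (n : ℕ) → (Fin (n + 1) → V) → V)
    (r : ℕ → V) : ℕ → V
  | 0 => c₀
  | n + 1 => F n (fun i : Fin (n + 1) => r i)

/-- The cop has a winning strategy in the cop and robber game with radius of
capture `k` on the graph `G`: the cop chooses a starting vertex and a strategy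
such that, against every legal play of the robber (at each step the robber
stays or moves to an adjacent vertex; his moves may depend on the whole
history), the cop's play is legal and at some point of the game the distance
between the two players is at most `k`. -/
def CopWinRC {V : Type*} (G : SimpleGraph V) (k : ℕ) : Prop :=
  ∃ (c₀ : V) (F : (n : ℕ) → (Fin (n + 1) → V) → V),
    ∀ r : ℕ → V,
      (∀ i, r (i + 1) = r i ∨ G.Adj (r i) (r (i + 1))) →
      ((∀ n, copSeq c₀ F r (n + 1) = copSeq c₀ F r n
            ∨ G.Adj (copSeq c₀ F r n) (copSeq c₀ F r (n + 1))) ∧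
        ∃ n, G.dist (copSeq c₀ F r n) (r n) ≤ k
           ∨ G.dist (copSeq c₀ F r (n + 1)) (r n) ≤ k)

/-- The radius capture number of `G`: the least `k` such that the cop wins
the cop and robber game with radius of capture `k`. -/
noncomputable def rcNum {V : Type*} (G : SimpleGraph V) : ℕ :=
  sInf {k | CopWinRC G k}

/-- Eccentricity of a vertex: the maximum distance to another vertex. -/
noncomputable def graphEcc {V : Type*} (G : SimpleGraph V) (v : V) : ℕ :=
  sSup (Set.range (G.dist v))

/-- Radius of a graph: the minimum eccentricity. -/
noncomputable def graphRad {V : Type*} (G : SimpleGraph V) : ℕ :=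
  sInf (Set.range (graphEcc G))

/-! ### Auxiliary definitions and lemmas -/

def copAt {V : Type*} (c₀ : V) (F : (n : ℕ) → (Fin (n + 1) → V) → V) : (n : ℕ) → (Fin n → V) → V
  | 0, _ => c₀
  | n + 1, hist => F n hist

theorem copSeq_eq_copAt {V : Type*} (c₀ : V) (F : (n : ℕ) → (Fin (n + 1) → V) → V)
    (r : ℕ → V) (n : ℕ) : copSeq c₀ F r n = copAt c₀ F n (fun i : Fin n => r i) := by
  cases n <;> rfl

theorem copSeq_succ {V : Type*} (c₀ : V) (F : (n : ℕ) → (Fin (n + 1) → V) → V)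
    (r : ℕ → V) (n : ℕ) : copSeq c₀ F r (n + 1) = F n (fun i : Fin (n + 1) => r i) := rfl

lemma iso_dist_le {V : Type*} {G : SimpleGraph V} (φ : G ≃g G) (hG : G.Connected) (u v : V) :
    G.dist (φ u) (φ v) ≤ G.dist u v := by
  obtain ⟨p, hp⟩ := hG.exists_walk_length_eq_dist u v
  calc G.dist (φ u) (φ v) ≤ (p.map φ.toHom).length := dist_le _
    _ = p.length := by simp
    _ = _ := hp

lemma iso_dist {V : Type*} {G : SimpleGraph V} (φ : G ≃g G) (hG : G.Connected) (u v : V) :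
    G.dist (φ u) (φ v) = G.dist u v := by
  refine le_antisymm (iso_dist_le φ hG u v) ?_
  have := iso_dist_le φ.symm hG (φ u) (φ v)
  simpa using this

open Classical in
/-- One step of the robber: the cop was at `c`, has just moved to `c'`, the robber is at `r`.
The robber moves to the image of `c` under an automorphism swapping `c'` and `r`
(if that is a legal move; otherwise he stays). -/
noncomputable def robStep {V : Type*} (G : SimpleGraph V)
    (hgen : ∀ u v : V, ∃ φ : G ≃g G, φ u = v ∧ φ v = u)
    (c c' r : V) : V :=
  if Classical.choose (hgen c' r) c = r ∨ G.Adj r (Classical.choose (hgen c' r) c)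
    then Classical.choose (hgen c' r) c else r

lemma robStep_legal {V : Type*} (G : SimpleGraph V)
    (hgen : ∀ u v : V, ∃ φ : G ≃g G, φ u = v ∧ φ v = u) (c c' r : V) :
    robStep G hgen c c' r = r ∨ G.Adj r (robStep G hgen c c' r) := by
  unfold robStep
  split
  · next h => exact h
  · exact Or.inl rfl

lemma robStep_dist {V : Type*} {G : SimpleGraph V} (hG : G.Connected)
    (hgen : ∀ u v : V, ∃ φ : G ≃g G, φ u = v ∧ φ v = u) {c c' : V} (r : V)
    (hleg : c' = c ∨ G.Adj c c') :
    G.dist c' (robStep G hgen c c' r) = G.dist c r := by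
  have hφ := Classical.choose_spec (hgen c' r)
  set φ := Classical.choose (hgen c' r) with hφdef
  unfold robStep
  rw [← hφdef]
  rcases hleg with he | hadj
  · have h1 : φ c = r := by rw [← he]; exact hφ.1
    rw [if_pos (Or.inl h1), h1, he]
  · have h2 : G.Adj (φ c) r := by
      rw [← hφ.1]; exact φ.map_adj_iff.mpr hadj
    rw [if_pos (Or.inr h2.symm), ← hφ.2, iso_dist φ hG, SimpleGraph.dist_comm]

/-- The robber's full trajectory against the cop strategy `(c₀, F)`, starting at `r0`. -/
noncomputable def robSeq {V : Type*} (G : SimpleGraph V)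
    (hgen : ∀ u v : V, ∃ φ : G ≃g G, φ u = v ∧ φ v = u)
    (c₀ : V) (F : (n : ℕ) → (Fin (n + 1) → V) → V) (r0 : V) : ℕ → V
  | 0 => r0
  | n + 1 =>
      robStep G hgen
        (copAt c₀ F n (fun i : Fin n => robSeq G hgen c₀ F r0 i))
        (F n (fun i : Fin (n + 1) => robSeq G hgen c₀ F r0 i))
        (robSeq G hgen c₀ F r0 n)
  decreasing_by
  · exact Nat.lt_succ_of_lt i.isLt
  · exact i.isLt
  · exact Nat.lt_succ_self n

theorem robSeq_zero {V : Type*} (G : SimpleGraph V)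
    (hgen : ∀ u v : V, ∃ φ : G ≃g G, φ u = v ∧ φ v = u)
    (c₀ : V) (F : (n : ℕ) → (Fin (n + 1) → V) → V) (r0 : V) :
    robSeq G hgen c₀ F r0 0 = r0 := by rw [robSeq]

theorem robSeq_succ {V : Type*} (G : SimpleGraph V)
    (hgen : ∀ u v : V, ∃ φ : G ≃g G, φ u = v ∧ φ v = u)
    (c₀ : V) (F : (n : ℕ) → (Fin (n + 1) → V) → V) (r0 : V) (n : ℕ) :
    robSeq G hgen c₀ F r0 (n + 1) =
      robStep G hgen
        (copSeq c₀ F (robSeq G hgen c₀ F r0) n)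
        (copSeq c₀ F (robSeq G hgen c₀ F r0) (n + 1))
        (robSeq G hgen c₀ F r0 n) := by
  rw [robSeq, copSeq_eq_copAt, copSeq_succ]

/-- If `G` is a connected generously-transitive graph (any two vertices can be
swapped by an automorphism), with radius at least 1, then `rc(G) = rad(G) - 1`. -/
theorem rcNum_of_generouslyTransitive {V : Type*} [Fintype V] [Nonempty V]
    (G : SimpleGraph V) (hG : G.Connected)
    (hgen : ∀ u v : V, ∃ φ : G ≃g G, φ u = v ∧ φ v = u)
    (hrad : 1 ≤ graphRad G) :
    rcNum G = graphRad G - 1 := by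
  classical
  set R := graphRad G with hRdef
  -- upper bound: the cop wins with capture radius R - 1
  obtain ⟨cstar, hcs⟩ : ∃ c, graphEcc G c = R :=
    Nat.sInf_mem (Set.range_nonempty (graphEcc G))
  have hball : ∀ v, G.dist cstar v ≤ R := fun v =>
    hcs ▸ le_csSup ((Set.finite_range _).bddAbove) (Set.mem_range_self v)
  have hstep : ∀ r0 : V, ∃ w : V, (w = cstar ∨ G.Adj cstar w) ∧ G.dist w r0 ≤ R - 1 := by
    intro r0
    by_cases h : G.dist cstar r0 ≤ R - 1
    · exact ⟨cstar, Or.inl rfl, h⟩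
    · have hd : G.dist cstar r0 = R := le_antisymm (hball r0) (by omega)
      obtain ⟨p, hp⟩ := hG.exists_walk_length_eq_dist cstar r0
      cases p with
      | nil => rw [SimpleGraph.dist_self] at hd; omega
      | cons hadj q =>
        refine ⟨_, Or.inr hadj, ?_⟩
        have hq : q.length = R - 1 := by
          rw [hd] at hp; simp at hp; omega
        exact hq ▸ dist_le q
  have hwin : CopWinRC G (R - 1) := by
    refine ⟨cstar, fun n hist => Classical.choose (hstep (hist 0)), fun r hr => ?_⟩
    set F : (n : ℕ) → (Fin (n + 1) → V) → V := fun n hist => Classical.choose (hstep (hist 0))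
      with hF
    have hcop : ∀ n, copSeq cstar F r (n + 1) = Classical.choose (hstep (r 0)) := by
      intro n
      rw [copSeq_succ]
      rfl
    have hspec := Classical.choose_spec (hstep (r 0))
    constructor
    · intro n
      cases n with
      | zero =>
        rw [hcop 0]
        show _ = copSeq cstar F r 0 ∨ G.Adj (copSeq cstar F r 0) _
        exact hspec.1
      | succ m => rw [hcop (m+1), hcop m]; exact Or.inl rfl
    · exact ⟨0, Or.inr (by rw [hcop 0]; exact hspec.2)⟩
  -- lower bound
  have hlow : ∀ k, CopWinRC G k → R - 1 ≤ k := by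
    intro k hk
    by_contra hlt
    push_neg at hlt
    have hk2 : k + 2 ≤ R := by omega
    obtain ⟨c₀, F, hF⟩ := hk
    obtain ⟨r0, hr0⟩ : ∃ r0, G.dist c₀ r0 = graphEcc G c₀ :=
      (Set.range_nonempty _).csSup_mem (Set.finite_range _)
    have hr0R : R ≤ G.dist c₀ r0 := by
      rw [hr0]; exact Nat.sInf_le (Set.mem_range_self c₀)
    set rob : ℕ → V := robSeq G hgen c₀ F r0 with hrob
    -- robber legality
    have hleg : ∀ i, rob (i + 1) = rob i ∨ G.Adj (rob i) (rob (i + 1)) := by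
      intro i
      have h := robSeq_succ G hgen c₀ F r0 i
      rw [← hrob] at h
      rw [h]
      exact robStep_legal G hgen _ _ _
    obtain ⟨hcopleg, n0, hcap⟩ := hF rob hleg
    -- invariant: the distance between cop and robber is constant
    have hdist : ∀ n, G.dist (copSeq c₀ F rob n) (rob n) = G.dist c₀ r0 := by
      intro n
      induction n with
      | zero =>
        have h0 : rob 0 = r0 := robSeq_zero G hgen c₀ F r0
        rw [h0]; rfl
      | succ m ih =>
        have h := robSeq_succ G hgen c₀ F r0 m
        rw [← hrob] at h
        rw [h, robStep_dist hG hgen _ (hcopleg m), ih]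
    -- contradiction from capture
    rcases hcap with h | h
    · rw [hdist n0] at h; omega
    · have h1 : G.dist (copSeq c₀ F rob n0) (copSeq c₀ F rob (n0 + 1)) ≤ 1 := by
        rcases hcopleg n0 with he | ha
        · rw [he, SimpleGraph.dist_self]; omega
        · calc G.dist _ _ ≤ ha.toWalk.length := dist_le _
            _ = 1 := by simp
      have h2 := hG.dist_triangle (u := copSeq c₀ F rob n0) (v := copSeq c₀ F rob (n0 + 1))
        (w := rob n0)
      rw [hdist n0] at h2
      omega
  -- conclude
  have hmem := Nat.sInf_mem (⟨R - 1, hwin⟩ : {k | CopWinRC G k}.Nonempty)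
  exact le_antisymm (Nat.sInf_le hwin) (hlow _ hmem)
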